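/- Let N ∈ ℕ, p prime, μ ∈ (Z_N)^× with μ ≠ 1 and μ^p = 1 in Z_N, and M_b := Σ_{i=0}^{b-1} μ^i. Then the map b ↦ M_b is injective on Z_p, i.e., for b, b' ∈ {0,1,...,p-1} with b ≠ b', M_b ≠ M_{b'} in Z_N. -/
import Mathlib

lemma aux_sum_ne {N p : ℕ} (hp : p.Prime) (μ : ZMod N) (hμ : IsUnit μ)
    (hμ1 : μ ≠ 1) (hord : μ ^ p = 1)
    (b b' : ℕ) (hb' : b' < p) (hlt : b < b') :
    ∑ i ∈ Finset.range b, μ ^ i ≠ ∑ i ∈ Finset.range b', μ ^ i := by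
  intro heq
  have hS : ∑ i ∈ Finset.Ico b b', μ ^ i = 0 := by
    have := Finset.sum_range_add_sum_Ico (fun i => μ ^ i) hlt.le
    rw [heq] at this
    exact add_eq_left.mp this
  rw [Finset.sum_Ico_eq_sum_range] at hS
  simp only [pow_add, ← Finset.mul_sum] at hS
  have hS2 : ∑ i ∈ Finset.range (b' - b), μ ^ i = 0 := by
    rcases hμ.pow b with ⟨u, hu⟩
    rw [← hu] at hS
    exact (Units.mul_right_eq_zero u).mp hS
  have hk1 : μ ^ (b' - b) = 1 := by
    have := geom_sum_mul μ (b' - b)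
    rw [hS2, zero_mul] at this
    exact sub_eq_zero.mp this.symm
  have hop : orderOf μ = p := by
    have hdvd := orderOf_dvd_of_pow_eq_one hord
    rcases (Nat.Prime.eq_one_or_self_of_dvd hp _ hdvd) with h | h
    · exact absurd (orderOf_eq_one_iff.mp h) hμ1
    · exact h
  have hdvd : p ∣ b' - b := hop ▸ orderOf_dvd_of_pow_eq_one hk1
  have hpos : 0 < b' - b := Nat.sub_pos_of_lt hlt
  have := Nat.le_of_dvd hpos hdvd
  omega

theorem stmt_8 {N p : ℕ} (hp : p.Prime) (μ : ZMod N) (hμ : IsUnit μ)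
    (hμ1 : μ ≠ 1) (hord : μ ^ p = 1)
    (b b' : ℕ) (hb : b < p) (hb' : b' < p) (hne : b ≠ b') :
    ∑ i ∈ Finset.range b, μ ^ i ≠ ∑ i ∈ Finset.range b', μ ^ i := by
  rcases lt_or_gt_of_ne hne with h | h
  · exact aux_sum_ne hp μ hμ hμ1 hord b b' hb' h
  · exact (aux_sum_ne hp μ hμ hμ1 hord b' b hb h).symm
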